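/- Let G_0^#(d) be the universal step-2 group on ℝ^{Y_d} and A_0(n) the polynomial sequence with [A_0(n)]_{l_1 0} = n^{l_1}, [A_0(n)]_{l_1 l_2} = 0 for l_2 ≥ 1. For x = (x_1,…,x_r), y = (y_1,…,y_r) ∈ ℝ^r, the product D(x,y) = A_0(x_1)^{-1}·A_0(y_1)·…·A_0(x_r)^{-1}·A_0(y_r) has coordinates: [D(x,y)]_{l_1 0} = Σ_{j=1}^r (y_j^{l_1} − x_j^{l_1}), and for l_2 ≥ 1, [D(x,y)]_{l_1 l_2} = Σ_{1 ≤ j_1 < j_2 ≤ r} (y_{j_1}^{l_1} − x_{j_1}^{l_1})(y_{j_2}^{l_2} − x_{j_2}^{l_2}) + Σ_{j=1}^r (x_j^{l_1+l_2} − x_j^{l_1} y_j^{l_2}). -/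

import Mathlib

/-- Index set `Y_d = {(l₁,l₂) : 0 ≤ l₂ < l₁ ≤ d}`. -/
def Yd (d : ℕ) := {p : Fin (d + 1) × Fin (d + 1) // p.2.val < p.1.val}

instance (d : ℕ) : DecidableEq (Yd d) := by unfold Yd; infer_instance
instance (d : ℕ) : Fintype (Yd d) := by unfold Yd; infer_instance

/-- The index `(l₁, 0)` associated to `p = (l₁, l₂) ∈ Y_d`. -/
def idxA {d : ℕ} (p : Yd d) : Yd d :=
  ⟨(p.val.1, 0), by simpa using Nat.lt_of_le_of_lt (Nat.zero_le _) p.prop⟩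

/-- The index `(l₂, 0)` associated to `p = (l₁, l₂) ∈ Y_d` with `l₂ ≠ 0`. -/
def idxB {d : ℕ} (p : Yd d) (h : p.val.2.val ≠ 0) : Yd d :=
  ⟨(p.val.2, 0), by simpa using Nat.pos_of_ne_zero h⟩

/-- The multiplication law of the universal step-2 nilpotent group `G₀^#(d)`:
`[x·y]_{l₁l₂} = x_{l₁l₂} + y_{l₁l₂}` if `l₂ = 0`, and
`[x·y]_{l₁l₂} = x_{l₁l₂} + y_{l₁l₂} + x_{l₁0}·y_{l₂0}` if `l₂ ≥ 1`. -/
def gmul {R : Type*} [CommRing R] {d : ℕ} (x y : Yd d → R) : Yd d → R := fun p =>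
  if h : p.val.2.val = 0 then x p + y p
  else x p + y p + x (idxA p) * y (idxB p h)

/-- The polynomial sequence `A₀(t)` with `[A₀(t)]_{l₁0} = t^{l₁}`, `[A₀(t)]_{l₁l₂} = 0` for
`l₂ ≥ 1`. -/
def A0 {d : ℕ} (t : ℝ) : Yd d → ℝ := fun p =>
  if p.val.2.val = 0 then t ^ p.val.1.val else 0

open scoped BigOperators

/-- for any function `Ainv` giving the group inverses of the `A₀(t)`, the product
`D(x,y) = A₀(x₁)⁻¹·A₀(y₁)·…·A₀(x_r)⁻¹·A₀(y_r)` has the stated explicit coordinates. -/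
theorem stmt7 (d r : ℕ) (Ainv : ℝ → Yd d → ℝ)
    (hinv : ∀ t : ℝ,
      gmul (A0 (d := d) t) (Ainv t) = (fun _ => 0) ∧
        gmul (Ainv t) (A0 (d := d) t) = (fun _ => 0))
    (x y : Fin r → ℝ) :
    (List.finRange r).foldl (fun acc j => gmul (gmul acc (Ainv (x j))) (A0 (y j)))
        (fun _ => 0)
      = fun p : Yd d =>
        if p.val.2.val = 0 then
          ∑ j, (y j ^ p.val.1.val - x j ^ p.val.1.val)
        else
          (∑ j2, ∑ j1 ∈ Finset.univ.filter (fun j1 => j1 < j2),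
              (y j1 ^ p.val.1.val - x j1 ^ p.val.1.val) *
                (y j2 ^ p.val.2.val - x j2 ^ p.val.2.val)) +
            ∑ j, (x j ^ (p.val.1.val + p.val.2.val) -
              x j ^ p.val.1.val * y j ^ p.val.2.val) := by
  classical
  -- Coordinates of the inverse, first on the abelianized part, then in general.
  have key0 : ∀ (t : ℝ) (q : Yd d), q.val.2.val = 0 → Ainv t q = -t ^ q.val.1.val := by
    intro t q hq
    have h := congrFun (hinv t).2 q
    simp only [gmul, dif_pos hq, A0, if_pos hq] at h
    linarith
  have key1 : ∀ (t : ℝ) (q : Yd d), q.val.2.val ≠ 0 →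
      Ainv t q = t ^ (q.val.1.val + q.val.2.val) := by
    intro t q hq
    have h := congrFun (hinv t).2 q
    have hB : (idxB q hq).val.2.val = 0 := by simp [idxB]
    have hA : (idxA q).val.2.val = 0 := by simp [idxA]
    simp only [gmul, dif_neg hq, A0, if_neg hq, if_pos hB] at h
    rw [key0 t _ hA] at h
    have hAA : (idxA q).val.1.val = q.val.1.val := rfl
    have hBB : (idxB q hq).val.1.val = q.val.2.val := rfl
    rw [hAA, hBB] at h
    rw [pow_add]
    linear_combination h
  -- main induction on the length of the processed prefix
  have key : ∀ k : ℕ, k ≤ r →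
      ((List.finRange r).take k).foldl
          (fun acc j => gmul (gmul acc (Ainv (x j))) (A0 (y j))) (fun _ => 0)
        = fun p : Yd d =>
          if p.val.2.val = 0 then
            ∑ j ∈ Finset.univ.filter (fun j : Fin r => j.val < k),
              (y j ^ p.val.1.val - x j ^ p.val.1.val)
          else
            (∑ j2 ∈ Finset.univ.filter (fun j2 : Fin r => j2.val < k),
                ∑ j1 ∈ Finset.univ.filter (fun j1 => j1 < j2),
                (y j1 ^ p.val.1.val - x j1 ^ p.val.1.val) *
                  (y j2 ^ p.val.2.val - x j2 ^ p.val.2.val)) +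
              ∑ j ∈ Finset.univ.filter (fun j : Fin r => j.val < k),
                (x j ^ (p.val.1.val + p.val.2.val) -
                  x j ^ p.val.1.val * y j ^ p.val.2.val) := by
    intro k
    induction k with
    | zero =>
      intro _
      funext p
      simp
    | succ k ih =>
      intro hk
      have hk' : k < r := hk
      set jk : Fin r := ⟨k, hk'⟩ with hjk
      have htake : (List.finRange r).take (k + 1) = (List.finRange r).take k ++ [jk] := by
        rw [List.take_succ]
        rw [List.getElem?_eq_getElem (by simpa using hk')]
        simp [hjk]
      rw [htake, List.foldl_append, List.foldl_cons, List.foldl_nil, ih (le_of_lt hk')]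
      have hfil : Finset.univ.filter (fun j : Fin r => j.val < k + 1)
          = insert jk (Finset.univ.filter (fun j : Fin r => j.val < k)) := by
        ext j
        simp [Nat.lt_succ_iff_lt_or_eq, Fin.ext_iff, hjk, or_comm]
        exact Nat.le_iff_lt_or_eq.trans or_comm
      have hnot : jk ∉ Finset.univ.filter (fun j : Fin r => j.val < k) := by
        simp [hjk]
      funext p
      by_cases hp : p.val.2.val = 0
      · simp only [gmul, dif_pos hp, A0, if_pos hp, hfil, Finset.sum_insert hnot,
          key0 (x jk) p hp]
        ring
      · have hA : (idxA p).val.2.val = 0 := by simp [idxA]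
        have hB : (idxB p hp).val.2.val = 0 := by simp [idxB]
        have hAA : (idxA p).val.1.val = p.val.1.val := rfl
        have hBB : (idxB p hp).val.1.val = p.val.2.val := rfl
        simp only [gmul, dif_neg hp, dif_pos hA, dif_pos hB, A0, if_neg hp, if_pos hA,
          if_pos hB, hfil, Finset.sum_insert hnot, if_neg, key1 (x jk) p hp,
          key0 (x jk) _ hA, key0 (x jk) _ hB, hAA, hBB]
        rw [← Finset.sum_mul]
        have hltf : (Finset.univ.filter (fun j1 : Fin r => j1 < jk))
            = Finset.univ.filter (fun j : Fin r => j.val < k) := by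
          ext j; simp [Fin.lt_def, hjk]
        rw [hltf]
        ring
  have htake : (List.finRange r).take r = List.finRange r := by simp
  have hu : Finset.univ.filter (fun j : Fin r => j.val < r) = Finset.univ :=
    Finset.filter_true_of_mem fun j _ => j.isLt
  have := key r le_rfl
  rw [htake] at this
  rw [this]
  simp only [hu]
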